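/- Let f = [[λ, 0],[0, 1/λ]] with λ ≠ 0, ±1, and let g ∈ SL(2,ℂ) with tr(g) = 0. If γ(f,g) = β(f), then g = [[0, μ],[−1/μ, 0]] for some μ ≠ 0, and consequently g f g⁻¹ = f⁻¹. -/

import Mathlib

theorem stmt_4 (lam : ℂ) (hlam : lam ≠ 0) (h1 : lam ≠ 1) (h2 : lam ≠ -1)
    (g : Matrix (Fin 2) (Fin 2) ℂ) (hdetg : g.det = 1) (htrg : Matrix.trace g = 0)
    (f : Matrix (Fin 2) (Fin 2) ℂ) (hf : f = !![lam, 0; 0, lam⁻¹])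
    (hgb : Matrix.trace (f * g * f⁻¹ * g⁻¹) - 2 = Matrix.trace f ^ 2 - 4) :
    (∃ μ : ℂ, μ ≠ 0 ∧ g = !![0, μ; -μ⁻¹, 0]) ∧ g * f * g⁻¹ = f⁻¹ := by
  obtain ⟨a, b, c, d, hg⟩ : ∃ a b c d, g = !![a, b; c, d] :=
    ⟨g 0 0, g 0 1, g 1 0, g 1 1, by ext i j; fin_cases i <;> fin_cases j <;> rfl⟩
  rw [hg, Matrix.trace_fin_two_of] at htrg
  rw [hg, Matrix.det_fin_two_of] at hdetg
  have hd0 : d = -a := by linear_combination htrg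
  subst hd0
  have hfinv : f⁻¹ = !![lam⁻¹, 0; 0, lam] := by
    rw [hf]
    apply Matrix.inv_eq_right_inv
    ext i j; fin_cases i <;> fin_cases j <;>
      simp [Matrix.mul_apply, Fin.sum_univ_two, hlam, mul_inv_cancel₀]
  have hginv : g⁻¹ = !![-a, -b; -c, a] := by
    apply Matrix.inv_eq_right_inv
    rw [hg]
    ext i j; fin_cases i <;> fin_cases j <;>
      simp [Matrix.mul_apply, Fin.sum_univ_two]
    · linear_combination hdetg
    · ring
    · ring
    · linear_combination hdetg
  rw [hfinv, hginv, hg, hf] at hgb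
  simp only [Matrix.mul_fin_two, Matrix.trace_fin_two_of, Matrix.cons_val',
    Matrix.cons_val_zero, Matrix.cons_val_one, Matrix.head_cons, Matrix.head_fin_const,
    Matrix.empty_val', Matrix.cons_val_fin_one, Matrix.trace_fin_two,
    Matrix.of_apply] at hgb
  field_simp at hgb
  have key' : a * a * (lam * lam - 1) ^ 2 * lam ^ 3 = 0 := by
    linear_combination lam ^ 3 * hgb - lam ^ 3 * (lam ^ 4 + 1) * hdetg
  have key : a * a * (lam * lam - 1) ^ 2 = 0 := by
    rcases mul_eq_zero.mp key' with h | h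
    · exact h
    · exact absurd h (pow_ne_zero _ hlam)
  have hll : lam * lam - 1 ≠ 0 := by
    have hfac : lam * lam - 1 = (lam - 1) * (lam + 1) := by ring
    rw [hfac]
    exact mul_ne_zero (sub_ne_zero.mpr h1) (fun h => h2 (by linear_combination h))
  have ha0 : a = 0 := by
    rcases mul_eq_zero.mp key with h | h
    · rcases mul_eq_zero.mp h with h | h <;> exact h
    · exact absurd h (pow_ne_zero _ hll)
  subst ha0
  have hbc : b * c = -1 := by linear_combination -hdetg
  have hbne : b ≠ 0 := by
    intro h; rw [h, zero_mul] at hbc; exact absurd hbc (by norm_num)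
  have hcb : c = -b⁻¹ := by
    field_simp
    linear_combination hbc
  constructor
  · exact ⟨b, hbne, by rw [hg, hcb]; norm_num⟩
  · rw [hfinv, hginv, hg, hf, hcb]
    ext i j; fin_cases i <;> fin_cases j <;>
      simp [Matrix.mul_apply, Fin.sum_univ_two] <;> field_simp <;> ring
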